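/- Strict Lyapunov decrease matrix. Let S ∈ ℝ^{m×m} be symmetric with all eigenvalues in the open interval (−1/3, 1). With F = [[S, S],[0, S]] ∈ ℝ^{2m×2m} and P = [[2I, (I−S)^{−1} − 2I], [(I−S)^{−1} − 2I, (I−S)^{−2} − 2(I−S)^{−1} + 2I]] ∈ ℝ^{2m×2m}, the matrix P − Fᵀ P F equals the block matrix [[2I − 2S², S − I], [S − I, I]] and is positive definite. -/

import Mathlib

open Finset Matrix

private lemma aux_conj {n : Type*} [Fintype n] [DecidableEq n] {N U : Matrix n n ℝ}
    (hN : N.PosDef) (hU : IsUnit U) : (U * N * Uᴴ).PosDef := by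
  rw [posDef_iff_dotProduct_mulVec]
  constructor
  · have h : Nᴴ = N := hN.isHermitian
    show (U * N * Uᴴ)ᴴ = U * N * Uᴴ
    rw [conjTranspose_mul, conjTranspose_mul, conjTranspose_conjTranspose, h, mul_assoc]
  · intro x hx
    have hUH : IsUnit Uᴴ := by
      rw [isUnit_iff_isUnit_det] at hU ⊢
      simpa using hU
    have hy : Uᴴ *ᵥ x ≠ 0 := by
      intro h
      apply hx
      have hinj := mulVec_injective_iff_isUnit.2 hUH
      exact hinj (by simpa using h)
    have := hN.dotProduct_mulVec_pos hy
    convert this using 1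
    rw [← mulVec_mulVec, ← mulVec_mulVec, dotProduct_mulVec, star_mulVec,
      conjTranspose_conjTranspose, ← dotProduct_mulVec]

private lemma aux_blockdiag {n : Type*} [Fintype n] [DecidableEq n] {A B : Matrix n n ℝ}
    (hA : A.PosDef) (hB : B.PosDef) :
    (Matrix.fromBlocks A 0 0 B).PosDef := by
  rw [posDef_iff_dotProduct_mulVec]
  constructor
  · show _ᴴ = _
    have hA' : Aᴴ = A := hA.isHermitian
    have hB' : Bᴴ = B := hB.isHermitian
    rw [fromBlocks_conjTranspose, hA', hB']
    simp
  · intro x hx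
    have hmv : (fromBlocks A 0 0 B) *ᵥ x =
        Sum.elim (A *ᵥ (x ∘ Sum.inl)) (B *ᵥ (x ∘ Sum.inr)) := by
      rw [fromBlocks_mulVec]
      simp
    rw [hmv]
    have hsplit : star x ⬝ᵥ Sum.elim (A *ᵥ (x ∘ Sum.inl)) (B *ᵥ (x ∘ Sum.inr)) =
        star (x ∘ Sum.inl) ⬝ᵥ (A *ᵥ (x ∘ Sum.inl)) +
        star (x ∘ Sum.inr) ⬝ᵥ (B *ᵥ (x ∘ Sum.inr)) := by
      simp [dotProduct, Fintype.sum_sum_type]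
    rw [hsplit]
    rcases (by
      by_contra h
      push_neg at h
      apply hx
      ext (i | i)
      · exact congrFun h.1 i
      · exact congrFun h.2 i : x ∘ Sum.inl ≠ 0 ∨ x ∘ Sum.inr ≠ 0) with h | h
    · have := hA.dotProduct_mulVec_pos h
      have h2 := hB.posSemidef.dotProduct_mulVec_nonneg (x ∘ Sum.inr)
      simp -failIfUnchanged only [RCLike.re_to_real] at *
      linarith [h2]
    · have := hB.dotProduct_mulVec_pos h
      have h2 := hA.posSemidef.dotProduct_mulVec_nonneg (x ∘ Sum.inl)
      simp -failIfUnchanged only [RCLike.re_to_real] at *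
      linarith [h2]

private lemma aux_conj_poly {n : Type*} [Fintype n] [DecidableEq n] (V D : Matrix n n ℝ)
    (hV : Vᴴ * V = 1) (hV' : V * Vᴴ = 1) :
    2 - 2 * (V * D * Vᴴ) ^ 2 - (V * D * Vᴴ - 1) * (V * D * Vᴴ - 1) =
      V * (2 - 2 * D ^ 2 - (D - 1) * (D - 1)) * Vᴴ := by
  simp only [← one_add_one_eq_two]
  linear_combination (norm := noncomm_ring)
    -(V * D * hV * (D * Vᴴ)) - (V * D * hV * (D * Vᴴ)) - (V * D * hV * (D * Vᴴ)) - hV'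


/-- **Strict Lyapunov decrease matrix.**
Let `S ∈ ℝ^{m×m}` be symmetric with all eigenvalues in `(−1/3, 1)`. With
`F = [[S,S],[0,S]]` and `P = [[2I, (I−S)⁻¹ − 2I], [(I−S)⁻¹ − 2I, (I−S)⁻² − 2(I−S)⁻¹ + 2I]]`,
the matrix `P − Fᵀ P F` equals the block matrix `[[2I − 2S², S − I], [S − I, I]]` and is
positive definite. -/
theorem strict_lyapunov_decrease
    (m : ℕ) (S : Matrix (Fin m) (Fin m) ℝ)
    (hS : S.IsHermitian)
    (hspec : ∀ μ ∈ spectrum ℝ S, μ ∈ Set.Ioo (-(1 / 3) : ℝ) 1) :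
    let F : Matrix (Fin m ⊕ Fin m) (Fin m ⊕ Fin m) ℝ := Matrix.fromBlocks S S 0 S
    let P : Matrix (Fin m ⊕ Fin m) (Fin m ⊕ Fin m) ℝ :=
      Matrix.fromBlocks 2 ((1 - S)⁻¹ - 2) ((1 - S)⁻¹ - 2)
        ((1 - S)⁻¹ ^ 2 - 2 * (1 - S)⁻¹ + 2)
    P - Fᵀ * P * F = Matrix.fromBlocks (2 - 2 * S ^ 2) (S - 1) (S - 1) 1 ∧
      (P - Fᵀ * P * F).PosDef := by
  intro F P
  -- `1 - S` is invertible
  have hone : IsUnit (1 - S) := by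
    by_contra h
    have h1 : (1 : ℝ) ∈ spectrum ℝ S := by
      rw [spectrum.mem_iff]
      simpa using h
    exact lt_irrefl _ (hspec 1 h1).2
  have hunit : IsUnit (1 - S).det := (isUnit_iff_isUnit_det _).mp hone
  have hST : Sᵀ = S := by ext i j; simpa using congrFun (congrFun hS i) j
  -- block identity
  have hblock : P - Fᵀ * P * F = Matrix.fromBlocks (2 - 2 * S ^ 2) (S - 1) (S - 1) 1 := by
    show Matrix.fromBlocks 2 ((1 - S)⁻¹ - 2) ((1 - S)⁻¹ - 2)
        ((1 - S)⁻¹ ^ 2 - 2 * (1 - S)⁻¹ + 2)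
      - (Matrix.fromBlocks S S 0 S)ᵀ * (Matrix.fromBlocks 2 ((1 - S)⁻¹ - 2) ((1 - S)⁻¹ - 2)
        ((1 - S)⁻¹ ^ 2 - 2 * (1 - S)⁻¹ + 2)) * (Matrix.fromBlocks S S 0 S)
      = Matrix.fromBlocks (2 - 2 * S ^ 2) (S - 1) (S - 1) 1
    set A := (1 - S)⁻¹ with hA
    have h1 : (1 - S) * A = 1 := mul_nonsing_inv _ hunit
    have h2 : A * (1 - S) = 1 := nonsing_inv_mul _ hunit
    simp only [← one_add_one_eq_two]
    rw [fromBlocks_transpose, transpose_zero, hST, fromBlocks_multiply, fromBlocks_multiply,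
      sub_eq_iff_eq_add]
    simp only [fromBlocks_add]
    have hSA : S * A = A - 1 := by linear_combination (norm := noncomm_ring) -h1
    have hAS : A * S = A - 1 := by linear_combination (norm := noncomm_ring) -h2
    have hSAS : S * A * S = A - 1 - S := by
      rw [hSA]; linear_combination (norm := noncomm_ring) hAS
    have hSAAS : S * (A * A) * S = A * A - 2 * A + 1 := by
      rw [← mul_assoc, hSA]
      linear_combination (norm := noncomm_ring) A * hAS - hAS
    refine fromBlocks_inj.mpr ⟨?_, ?_, ?_, ?_⟩
    · noncomm_ring
    · linear_combination (norm := noncomm_ring) -hSAS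
    · linear_combination (norm := noncomm_ring) -hSAS
    · linear_combination (norm := noncomm_ring) -hSAAS
  refine ⟨hblock, ?_⟩
  rw [hblock]
  -- positive definiteness
  set V : Matrix (Fin m) (Fin m) ℝ := (hS.eigenvectorUnitary : Matrix (Fin m) (Fin m) ℝ) with hV
  set d : Fin m → ℝ := hS.eigenvalues with hd
  have hV1 : Vᴴ * V = 1 := by
    simpa [star_eq_conjTranspose] using mem_unitaryGroup_iff'.mp hS.eigenvectorUnitary.2
  have hV2 : V * Vᴴ = 1 := by
    simpa [star_eq_conjTranspose] using mem_unitaryGroup_iff.mp hS.eigenvectorUnitary.2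
  have hSpec : S = V * diagonal d * Vᴴ := by
    simpa [star_eq_conjTranspose] using hS.spectral_theorem
  have hd_mem : ∀ i, d i ∈ Set.Ioo (-(1 / 3) : ℝ) 1 := fun i =>
    hspec _ (hS.eigenvalues_mem_spectrum_real i)
  -- the Schur complement
  set q : Fin m → ℝ := fun i => 2 - 2 * d i ^ 2 - (d i - 1) * (d i - 1) with hq
  have hqpos : ∀ i, 0 < q i := by
    intro i
    obtain ⟨h1, h2⟩ := hd_mem i
    have : (0:ℝ) < (1 - d i) * (1 + 3 * d i) := by nlinarith
    simp only [hq]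
    nlinarith
  have hdiagq : (2 : Matrix (Fin m) (Fin m) ℝ) - 2 * (diagonal d) ^ 2
      - (diagonal d - 1) * (diagonal d - 1) = diagonal q := by
    rw [diagonal_pow, ← diagonal_one, diagonal_sub, ← diagonal_ofNat, diagonal_mul_diagonal,
      diagonal_sub, diagonal_mul_diagonal, diagonal_sub]
    congr 1
  have hQ : (2 - 2 * S ^ 2 - (S - 1) * (S - 1) : Matrix (Fin m) (Fin m) ℝ)
      = V * diagonal q * Vᴴ := by
    rw [← hdiagq]
    conv_lhs => rw [hSpec]
    exact aux_conj_poly V (diagonal d) hV1 hV2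
  have hQpos : (2 - 2 * S ^ 2 - (S - 1) * (S - 1) : Matrix (Fin m) (Fin m) ℝ).PosDef := by
    rw [hQ]
    exact aux_conj (posDef_diagonal_iff.mpr hqpos) (by
      rw [isUnit_iff_isUnit_det]
      have : V.det * Vᴴ.det = 1 := by rw [← det_mul, hV2, det_one]
      exact IsUnit.of_mul_eq_one _ this)
  -- congruence decomposition
  set U : Matrix (Fin m ⊕ Fin m) (Fin m ⊕ Fin m) ℝ := fromBlocks 1 (S - 1) 0 1 with hU
  have hUH : Uᴴ = fromBlocks 1 0 (S - 1) 1 := by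
    rw [hU, fromBlocks_conjTranspose]
    have : (S - 1)ᴴ = S - 1 := by
      rw [conjTranspose_sub, hS.eq]
      simp
    rw [this]
    simp
  have hdecomp : Matrix.fromBlocks (2 - 2 * S ^ 2) (S - 1) (S - 1) 1
      = U * fromBlocks (2 - 2 * S ^ 2 - (S - 1) * (S - 1)) 0 0 1 * Uᴴ := by
    rw [hUH, hU, fromBlocks_multiply, fromBlocks_multiply]
    simp only [← one_add_one_eq_two]
    refine (fromBlocks_inj.mpr ⟨?_, ?_, ?_, ?_⟩).symm <;> noncomm_ring
  rw [hdecomp]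
  refine aux_conj (aux_blockdiag hQpos Matrix.PosDef.one) ?_
  rw [isUnit_iff_isUnit_det, hU, det_fromBlocks_zero₂₁]
  simp
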